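/- arXiv:1506.08716 — 2 statements merged into one kernel-verified Lean document; each statement's English description precedes it below -/
import Mathlib

section
/- Let D be the unique ℚ-linear derivation on the polynomial ring ℚ[x,y,z] with D(x) = xyz, D(y) = yz², D(z) = y²z. Then for every integer n ≥ 1, Dⁿ(x) = x · ∑_{k=1}^{2n−1} T(n,k) y^k z^{2n−k}. -/
/-- The numbers T(n,k) defined by T(1,1) = 1, T(1,k) = 0 for k ≠ 1, and the
recurrence T(n+1,k) = k·T(n,k) + T(n,k-1) + (2n-k+2)·T(n,k-2) for n ≥ 1.
(The value at n = 0 encodes T_0(x) = 1.) -/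
def Tc : ℕ → ℤ → ℤ
  | 0, k => if k = 0 then 1 else 0
  | 1, k => if k = 1 then 1 else 0
  | (n+2), k => k * Tc (n+1) k + Tc (n+1) (k-1) + (2*((n : ℤ)+1) - k + 2) * Tc (n+1) (k-2)

lemma Tc_zero : ∀ n : ℕ, 1 ≤ n → ∀ k : ℤ, (k ≤ 0 ∨ 2*(n:ℤ) ≤ k) → Tc n k = 0 := by
  intro n
  induction n with
  | zero => omega
  | succ n ih =>
    intro _ k hk
    match n, hk with
    | 0, hk => simp only [Tc]; split <;> omega
    | (m+1), hk =>
      have h1 : Tc (m+1) k = 0 := by apply ih (by omega); push_cast at hk ⊢; omega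
      have h2 : Tc (m+1) (k-1) = 0 := by apply ih (by omega); push_cast at hk ⊢; omega
      have h3 : Tc (m+1) (k-2) = 0 := by apply ih (by omega); push_cast at hk ⊢; omega
      show (k * Tc (m+1) k + Tc (m+1) (k-1) + (2*((m:ℤ)+1) - k + 2) * Tc (m+1) (k-2)) = 0
      rw [h1, h2, h3]; ring

lemma sum_Icc_one {M : Type*} [AddCommMonoid M] (m : ℕ) (f : ℕ → M) :
    ∑ k ∈ Finset.Icc 1 m, f k = ∑ i ∈ Finset.range m, f (i+1) := by
  induction m with
  | zero => simp
  | succ m ih =>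
    rw [Finset.sum_Icc_succ_top (by omega), ih, Finset.sum_range_succ]

open MvPolynomial

lemma Dterm (D : Derivation ℚ (MvPolynomial (Fin 3) ℚ) (MvPolynomial (Fin 3) ℚ))
    (hy : D (X 1) = X 1 * X 2 ^ 2)
    (hz : D (X 2) = X 1 ^ 2 * X 2)
    (a : ℚ) (k m : ℕ) (hk : 1 ≤ k) (hm : 1 ≤ m) :
    D (C a * X 1 ^ k * X 2 ^ m)
      = C (a * k) * X 1 ^ k * X 2 ^ (m+2) + C (a * m) * X 1 ^ (k+2) * X 2 ^ m := by
  obtain ⟨k, rfl⟩ : ∃ k', k = k' + 1 := ⟨k - 1, by omega⟩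
  obtain ⟨m, rfl⟩ : ∃ m', m = m' + 1 := ⟨m - 1, by omega⟩
  have hC : D (C a) = 0 := by
    rw [← MvPolynomial.algebraMap_eq]; exact D.map_algebraMap a
  simp only [Derivation.leibniz, Derivation.leibniz_pow, hy, hz, hC, smul_eq_mul,
    nsmul_eq_mul, Nat.add_sub_cancel, map_mul, map_natCast, map_add, map_one]
  push_cast
  ring

lemma key (n : ℕ) (hn : 1 ≤ n) :
    ((X 1 * X 2) : MvPolynomial (Fin 3) ℚ) * (∑ k ∈ Finset.Icc 1 (2*n-1),
        C ((Tc n k : ℚ)) * X 1 ^ k * X 2 ^ (2*n-k))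
      + ∑ k ∈ Finset.Icc 1 (2*n-1),
          (C ((Tc n k : ℚ) * k) * X 1 ^ k * X 2 ^ (2*n-k+2)
            + C ((Tc n k : ℚ) * ((2*n-k : ℕ) : ℚ)) * X 1 ^ (k+2) * X 2 ^ (2*n-k))
      = ∑ j ∈ Finset.Icc 1 (2*n+1),
          C ((Tc (n+1) j : ℚ)) * X 1 ^ j * X 2 ^ (2*n+2-j)
      := by
  obtain ⟨m, rfl⟩ : ∃ m, n = m + 1 := ⟨n - 1, by omega⟩
  clear hn
  have hz1 : ∀ k : ℤ, k ≤ 0 → Tc (m+1) k = 0 :=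
    fun k h => Tc_zero (m+1) (by omega) k (Or.inl h)
  have hz2 : ∀ k : ℤ, 2*((m:ℤ)+1) ≤ k → Tc (m+1) k = 0 :=
    fun k h => Tc_zero (m+1) (by omega) k (Or.inr h)
  rw [sum_Icc_one, sum_Icc_one, sum_Icc_one]
  beta_reduce
  rw [show 2*(m+1)-1 = 2*m+1 by omega, show 2*(m+1)+1 = 2*m+3 by omega,
    Finset.mul_sum, Finset.sum_add_distrib]
  -- split RHS via recurrence
  have hsplit : ∀ i, i ∈ Finset.range (2*m+3) →
      (C ((Tc (m+1+1) ((i+1 : ℕ)) : ℚ)) * X 1 ^ (i+1) * X 2 ^ (2*(m+1)+2-(i+1)) : MvPolynomial (Fin 3) ℚ)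
        = (C ((Tc (m+1) ((i+1 : ℕ)) : ℚ) * ((i+1 : ℕ) : ℚ)) * X 1 ^ (i+1) * X 2 ^ (2*(m+1)+2-(i+1)))
          + (C ((Tc (m+1) ((((i+1):ℕ):ℤ)-1) : ℚ)) * X 1 ^ (i+1) * X 2 ^ (2*(m+1)+2-(i+1)))
          + (C (((2*((m:ℤ)+1) - ((i+1):ℕ) + 2) * Tc (m+1) ((((i+1):ℕ):ℤ)-2) : ℤ) : ℚ)
              * X 1 ^ (i+1) * X 2 ^ (2*(m+1)+2-(i+1))) := by
    intro i _
    rw [show (Tc (m+1+1) (((i+1):ℕ):ℤ))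
        = (((i+1):ℕ):ℤ) * Tc (m+1) (((i+1):ℕ):ℤ) + Tc (m+1) ((((i+1):ℕ):ℤ)-1)
          + (2*((m:ℤ)+1) - (((i+1):ℕ):ℤ) + 2) * Tc (m+1) ((((i+1):ℕ):ℤ)-2) from rfl]
    push_cast [map_add, map_mul, map_sub, map_natCast, map_intCast]
    ring
  rw [Finset.sum_congr rfl hsplit, Finset.sum_add_distrib, Finset.sum_add_distrib]
  -- sum of f1 terms
  have e1 : (∑ i ∈ Finset.range (2*m+3),
      C ((Tc (m+1) ((i+1 : ℕ)) : ℚ) * ((i+1 : ℕ) : ℚ)) * X 1 ^ (i+1) * X 2 ^ (2*(m+1)+2-(i+1)) : MvPolynomial (Fin 3) ℚ)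
      = ∑ i ∈ Finset.range (2*m+1),
        C ((Tc (m+1) ((i+1 : ℕ)) : ℚ) * ((i+1 : ℕ) : ℚ)) * X 1 ^ (i+1) * X 2 ^ (2*(m+1)-(i+1)+2) := by
    rw [show 2*m+3 = (2*m+1)+1+1 from rfl, Finset.sum_range_succ, Finset.sum_range_succ]
    rw [hz2 ((2*m+1+1 : ℕ)) (by push_cast <;> omega), hz2 ((2*m+1+1+1 : ℕ)) (by push_cast <;> omega)]
    simp only [Int.cast_zero, zero_mul, map_zero, add_zero]
    refine Finset.sum_congr rfl fun i hi => ?_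
    simp only [Finset.mem_range] at hi
    rw [show 2*(m+1)+2-(i+1) = 2*(m+1)-(i+1)+2 by omega]
  -- sum of f2 terms
  have e2 : (∑ i ∈ Finset.range (2*m+3),
      C ((Tc (m+1) ((((i+1):ℕ):ℤ)-1) : ℚ)) * X 1 ^ (i+1) * X 2 ^ (2*(m+1)+2-(i+1)) : MvPolynomial (Fin 3) ℚ)
      = ∑ i ∈ Finset.range (2*m+1),
        X 1 * X 2 * (C ((Tc (m+1) ((i+1 : ℕ)) : ℚ)) * X 1 ^ (i+1) * X 2 ^ (2*(m+1)-(i+1))) := by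
    rw [show 2*m+3 = (2*m+2)+1 from rfl, Finset.sum_range_succ, Finset.sum_range_succ']
    rw [hz1 ((((0+1):ℕ):ℤ)-1) (by push_cast <;> omega),
      hz2 ((((2*m+2+1):ℕ):ℤ)-1) (by push_cast <;> omega)]
    simp only [Int.cast_zero, map_zero, zero_mul, add_zero]
    refine Finset.sum_congr rfl fun i hi => ?_
    simp only [Finset.mem_range] at hi
    rw [show ((((i+1+1):ℕ)):ℤ)-1 = (((i+1):ℕ):ℤ) by push_cast; ring,
      show 2*(m+1)+2-(i+1+1) = (2*(m+1)-(i+1))+1 by omega]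
    ring
  -- sum of f3 terms
  have e3 : (∑ i ∈ Finset.range (2*m+3),
      C (((2*((m:ℤ)+1) - ((i+1):ℕ) + 2) * Tc (m+1) ((((i+1):ℕ):ℤ)-2) : ℤ) : ℚ)
        * X 1 ^ (i+1) * X 2 ^ (2*(m+1)+2-(i+1)) : MvPolynomial (Fin 3) ℚ)
      = ∑ i ∈ Finset.range (2*m+1),
        C ((Tc (m+1) ((i+1 : ℕ)) : ℚ) * ((2*(m+1)-(i+1) : ℕ) : ℚ)) * X 1 ^ (i+1+2) * X 2 ^ (2*(m+1)-(i+1)) := by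
    rw [show 2*m+3 = (2*m+1)+1+1 from rfl, Finset.sum_range_succ', Finset.sum_range_succ']
    rw [hz1 ((((0+1):ℕ):ℤ)-2) (by push_cast <;> omega),
      hz1 ((((0+1+1):ℕ):ℤ)-2) (by push_cast <;> omega)]
    simp only [mul_zero, Int.cast_zero, map_zero, zero_mul, add_zero]
    refine Finset.sum_congr rfl fun i hi => ?_
    simp only [Finset.mem_range] at hi
    have hc : (((2*((m:ℤ)+1) - ((i+1+1+1):ℕ) + 2) : ℤ) : ℚ) = ((2*(m+1)-(i+1) : ℕ) : ℚ) := by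
      rw [Nat.cast_sub (by omega)]; push_cast; ring
    rw [show ((((i+1+1+1):ℕ)):ℤ)-2 = (((i+1):ℕ):ℤ) by push_cast; ring,
      show 2*(m+1)+2-(i+1+1+1) = 2*(m+1)-(i+1) by omega]
    push_cast [← hc]
    ring
  rw [e1, e2, e3]
  ring


/-- If D is the (unique) ℚ-linear derivation on ℚ[x,y,z] with D(x) = xyz,
D(y) = yz², D(z) = y²z, then for n ≥ 1,
Dⁿ(x) = x · ∑_(k=1)^(2n-1) T(n,k) y^k z^(2n-k). -/
theorem stmt8 (D : Derivation ℚ (MvPolynomial (Fin 3) ℚ) (MvPolynomial (Fin 3) ℚ))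
    (hx : D (X 0) = X 0 * X 1 * X 2)
    (hy : D (X 1) = X 1 * X 2 ^ 2)
    (hz : D (X 2) = X 1 ^ 2 * X 2)
    (n : ℕ) (hn : 1 ≤ n) :
    (⇑D)^[n] (X 0)
      = X 0 * ∑ k ∈ Finset.Icc 1 (2*n - 1),
          C ((Tc n k : ℚ)) * X 1 ^ k * X 2 ^ (2*n - k) := by
  induction n, hn using Nat.le_induction with
  | base =>
    simp only [Function.iterate_one, hx]
    norm_num [Tc]
    ring
  | succ n hn ih =>
    rw [Function.iterate_succ_apply', ih, Derivation.leibniz, smul_eq_mul, smul_eq_mul, hx]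
    have hD : D (∑ k ∈ Finset.Icc 1 (2*n-1), C ((Tc n k : ℚ)) * X 1 ^ k * X 2 ^ (2*n-k))
        = ∑ k ∈ Finset.Icc 1 (2*n-1),
            (C ((Tc n k : ℚ) * k) * X 1 ^ k * X 2 ^ (2*n-k+2)
              + C ((Tc n k : ℚ) * ((2*n-k : ℕ) : ℚ)) * X 1 ^ (k+2) * X 2 ^ (2*n-k)) := by
      rw [map_sum]
      refine Finset.sum_congr rfl fun k hk => ?_
      simp only [Finset.mem_Icc] at hk
      exact Dterm D hy hz _ k (2*n-k) (by omega) (by omega)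
    rw [hD]
    have hS' : (∑ k ∈ Finset.Icc 1 (2*(n+1)-1), C ((Tc (n+1) k : ℚ)) * X 1 ^ k * X 2 ^ (2*(n+1)-k) : MvPolynomial (Fin 3) ℚ)
        = ∑ j ∈ Finset.Icc 1 (2*n+1), C ((Tc (n+1) j : ℚ)) * X 1 ^ j * X 2 ^ (2*n+2-j) := by
      rw [show 2*(n+1)-1 = 2*n+1 by omega]
      refine Finset.sum_congr rfl fun k hk => ?_
      rw [show 2*(n+1)-k = 2*n+2-k by omega]
    rw [hS']
    linear_combination (X 0 : MvPolynomial (Fin 3) ℚ) * key n hn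
end

section
/- For every integer n ≥ 1, T_{n+1}(x) = x · ∑_{k=0}^{n} C(n,k) T_k(x) B_{n−k}(x²), where C(n,k) is the binomial coefficient and B_m is the type B Eulerian polynomial, as an identity of polynomials. -/
/-- The polynomial T_n(x) = ∑_(k=1)^(2n-1) T(n,k) x^k for n ≥ 1, with T_0(x) = 1. -/
noncomputable def Tpoly (n : ℕ) : Polynomial ℤ :=
  if n = 0 then 1 else ∑ k ∈ Finset.Icc 1 (2*n - 1), Polynomial.C (Tc n k) * Polynomial.X ^ k

/-- The type B Eulerian numbers: B(0,0) = 1, B(0,k) = 0 for k ≠ 0, and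
B(n,k) = (2k+1)·B(n-1,k) + (2n-2k+1)·B(n-1,k-1) for n ≥ 1. -/
def Bc : ℕ → ℤ → ℤ
  | 0, k => if k = 0 then 1 else 0
  | (n+1), k => (2*k+1) * Bc n k + (2*((n : ℤ)+1) - 2*k + 1) * Bc n (k-1)

/-- The type B Eulerian polynomial B_n(x) = ∑_(k=0)^(n) B(n,k) x^k. -/
noncomputable def Bpoly (n : ℕ) : Polynomial ℤ :=
  ∑ k ∈ Finset.range (n+1), Polynomial.C (Bc n k) * Polynomial.X ^ k

section Aux
open Polynomial Finset

noncomputable def Dop (p : Polynomial ℤ) : Polynomial ℤ := X * derivative p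

lemma Dop_Cmul (c : ℤ) (p : ℤ[X]) : Dop (C c * p) = C c * Dop p := by
  simp only [Dop, derivative_C_mul]; ring

lemma Dop_mul (p q : ℤ[X]) : Dop (p*q) = Dop p * q + p * Dop q := by
  simp only [Dop, derivative_mul]; ring

lemma Dop_sum (s : Finset ℕ) (f : ℕ → ℤ[X]) :
    Dop (∑ i ∈ s, f i) = ∑ i ∈ s, Dop (f i) := by
  simp only [Dop, map_sum derivative f s, mul_sum]

lemma Dop_X : Dop (X : ℤ[X]) = X := by simp [Dop]

lemma Dop_coeff (p : ℤ[X]) (k : ℕ) : (Dop p).coeff k = (k : ℤ) * p.coeff k := by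
  cases k with
  | zero => simp [Dop, mul_coeff_zero]
  | succ m => rw [Dop, coeff_X_mul, coeff_derivative]; push_cast; ring

lemma Dop_comp_sq (p : ℤ[X]) : Dop (p.comp (X^2)) = 2 * (Dop p).comp (X^2) := by
  simp only [Dop, derivative_comp, derivative_X_pow, mul_comp, X_comp]
  simp; ring

lemma Tc_vanish : ∀ n : ℕ, ∀ k : ℤ, (k ≤ 0 ∨ 2*(n+1) ≤ k) → Tc (n+1) k = 0 := by
  intro n
  induction n with
  | zero =>
    intro k hk
    have : k ≠ 1 := by omega
    simp [Tc, this]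
  | succ m ih =>
    intro k hk
    show (k * Tc (m+1) k + Tc (m+1) (k-1) + (2*((m : ℤ)+1) - k + 2) * Tc (m+1) (k-2)) = 0
    rw [ih k (by omega), ih (k-1) (by omega), ih (k-2) (by push_cast at hk ⊢; omega)]
    ring

lemma Bc_vanish : ∀ n : ℕ, ∀ k : ℤ, (k < 0 ∨ (n : ℤ) < k) → Bc n k = 0 := by
  intro n
  induction n with
  | zero =>
    intro k hk
    have : k ≠ 0 := by omega
    simp [Bc, this]
  | succ m ih =>
    intro k hk
    show ((2*k+1) * Bc m k + (2*((m : ℤ)+1) - 2*k + 1) * Bc m (k-1)) = 0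
    rw [ih k (by push_cast at hk ⊢; omega), ih (k-1) (by push_cast at hk ⊢; omega)]
    ring

lemma Tpoly_coeff (n k : ℕ) : (Tpoly n).coeff k = Tc n (k : ℤ) := by
  cases n with
  | zero =>
    simp only [Tpoly, if_pos rfl, coeff_one, Tc]
    by_cases h : k = 0 <;> simp [h, coeff_one]
  | succ m =>
    rw [Tpoly, if_neg (Nat.succ_ne_zero m), finset_sum_coeff]
    simp only [coeff_C_mul, coeff_X_pow]
    rw [Finset.sum_eq_single k]
    · by_cases h : k ∈ Finset.Icc 1 (2*(m+1) - 1)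
      · simp
      · simp only [Finset.mem_Icc] at h
        rw [Tc_vanish m k (by push_cast; omega)]
        simp
    · intro b _ hb; simp [Ne.symm hb]
    · intro h
      simp only [Finset.mem_Icc] at h
      rw [Tc_vanish m k (by push_cast; omega)]; simp

lemma Bpoly_coeff (n k : ℕ) : (Bpoly n).coeff k = Bc n (k : ℤ) := by
  rw [Bpoly, finset_sum_coeff]
  simp only [coeff_C_mul, coeff_X_pow]
  rw [Finset.sum_eq_single k]
  · by_cases h : k ∈ Finset.range (n+1)
    · simp
    · simp only [Finset.mem_range] at h
      rw [Bc_vanish n k (by push_cast; omega)]; simp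
  · intro b _ hb; simp [Ne.symm hb]
  · intro h
    simp only [Finset.mem_range] at h
    rw [Bc_vanish n k (by push_cast; omega)]; simp


lemma Dop_one : Dop (1 : Polynomial ℤ) = 0 := by simp [Dop]

lemma Tc_rec (n : ℕ) (k : ℤ) : Tc (n+2) k = k * Tc (n+1) k + Tc (n+1) (k-1) + (2*((n : ℤ)+1) - k + 2) * Tc (n+1) (k-2) := rfl
lemma Bc_rec (n : ℕ) (k : ℤ) : Bc (n+1) k = (2*k+1) * Bc n k + (2*((n : ℤ)+1) - 2*k + 1) * Bc n (k-1) := rfl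
lemma Tpoly_zero : Tpoly 0 = 1 := rfl
lemma Tpoly_one : Tpoly 1 = X := by
  rw [Tpoly]
  norm_num
  decide
lemma Tpoly_two : Tpoly 2 = X + X^2 + X^3 := by
  rw [Tpoly]
  norm_num
  rw [show Finset.Icc 1 3 = {1,2,3} from rfl]
  rw [Finset.sum_insert (by decide), Finset.sum_insert (by decide), Finset.sum_singleton]
  push_cast
  rw [show Tc 2 1 = 1 from by decide, show Tc 2 2 = 1 from by decide,
    show Tc 2 3 = 1 from by decide]
  push_cast
  ring
lemma Bp0 : Bpoly 0 = 1 := by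
  rw [Bpoly]
  simp [Bc]
lemma Bp1 : Bpoly 1 = 1 + X := by
  rw [Bpoly, Finset.sum_range_succ, Finset.sum_range_one]
  push_cast
  rw [show Bc 1 0 = 1 from by decide, show Bc 1 1 = 1 from by decide]
  simp


lemma coeff_X_mul' (p : ℤ[X]) (k : ℕ) :
    (X * p).coeff k = if k = 0 then 0 else p.coeff (k-1) := by
  cases k with
  | zero => simp [mul_coeff_zero]
  | succ m => simp [coeff_X_mul]

lemma Trec (n : ℕ) : Tpoly (n+1) =
    (1 - X^2) * Dop (Tpoly n) + (X + C (2*(n:ℤ)) * X^2) * Tpoly n := by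
  cases n with
  | zero => simp [Tpoly_one, Tpoly_zero, Dop_one]
  | succ m =>
    ext k
    have e : ((1:ℤ[X]) - X^2) * Dop (Tpoly (m+1)) + (X + C (2*(((m+1:ℕ)):ℤ)) * X^2) * Tpoly (m+1)
        = Dop (Tpoly (m+1)) + X * Tpoly (m+1)
          + C (2*((m:ℤ)+1)) * (X * (X * Tpoly (m+1))) - X * (X * Dop (Tpoly (m+1))) := by
      push_cast; ring
    rw [e, Tpoly_coeff, Tc_rec]
    simp only [coeff_sub, coeff_add, coeff_C_mul, coeff_X_mul', Dop_coeff, Tpoly_coeff]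
    match k with
    | 0 =>
      rw [show ((0:ℕ):ℤ) - 1 = -1 by norm_num, show ((0:ℕ):ℤ) - 2 = -2 by norm_num,
        Tc_vanish m (-1) (by omega), Tc_vanish m (-2) (by omega)]
      norm_num
    | 1 =>
      rw [show ((1:ℕ):ℤ) - 1 = ((0:ℕ):ℤ) by norm_num,
          Tc_vanish m (((1:ℕ):ℤ)-2) (by norm_num)]
      simp [Tpoly_coeff]
    | (j+2) =>
      have h1 : ((j+2:ℕ):ℤ) - 1 = ((j+1:ℕ):ℤ) := by push_cast; ring
      have h2 : ((j+2:ℕ):ℤ) - 2 = ((j:ℕ):ℤ) := by push_cast; ring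
      rw [h1, h2]
      simp only [show (j+2) - 1 = j+1 from rfl, show (j+1) - 1 = j from rfl]
      simp only [if_neg (Nat.succ_ne_zero _), Tpoly_coeff, Dop_coeff]
      push_cast
      ring

lemma Brec (n : ℕ) : Bpoly (n+1) =
    2 * (1 - X) * Dop (Bpoly n) + (1 + C (2*(n:ℤ)+1) * X) * Bpoly n := by
  ext k
  have e : (2:ℤ[X]) * (1 - X) * Dop (Bpoly n) + (1 + C (2*(n:ℤ)+1) * X) * Bpoly n
      = 2 * Dop (Bpoly n) + Bpoly n + C (2*(n:ℤ)+1) * (X * Bpoly n)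
        - 2 * (X * Dop (Bpoly n)) := by ring
  rw [e, Bpoly_coeff, Bc_rec]
  simp only [coeff_sub, coeff_add, coeff_C_mul, coeff_ofNat_mul, coeff_X_mul', Dop_coeff,
    Bpoly_coeff]
  match k with
  | 0 =>
    rw [show ((0:ℕ):ℤ) - 1 = -1 by norm_num, Bc_vanish n (-1) (by omega)]
    norm_num
  | (j+1) =>
    have h1 : ((j+1:ℕ):ℤ) - 1 = ((j:ℕ):ℤ) := by push_cast; ring
    rw [h1]
    simp only [show (j+1) - 1 = j from rfl, if_neg (Nat.succ_ne_zero _), Bpoly_coeff, Dop_coeff]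
    push_cast
    ring


lemma Qrec (n : ℕ) : (Bpoly (n+1)).comp (X^2) =
    (1 - X^2) * Dop ((Bpoly n).comp (X^2))
      + (1 + C (2*(n:ℤ)+1) * X^2) * ((Bpoly n).comp (X^2)) := by
  rw [Brec n]
  simp only [add_comp, mul_comp, sub_comp, one_comp, X_comp, C_comp, ofNat_comp,
    Dop_comp_sq]
  ring

lemma pascal (n : ℕ) :
    ∑ k ∈ Finset.range (n+2), C (((n+1).choose k : ℤ)) * Tpoly k
        * ((Bpoly (n+1-k)).comp (X ^ 2))
    = ∑ k ∈ Finset.range (n+1), C ((n.choose k : ℤ)) *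
        (Tpoly (k+1) * ((Bpoly (n-k)).comp (X^2))
          + Tpoly k * ((Bpoly (n-k+1)).comp (X^2))) := by
  have key : ∀ i ∈ Finset.range (n+1),
      C (((n+1).choose (i+1) : ℤ)) * Tpoly (i+1) * ((Bpoly (n+1-(i+1))).comp (X^2))
      = C ((n.choose i : ℤ)) * Tpoly (i+1) * ((Bpoly (n-i)).comp (X^2))
        + C ((n.choose (i+1) : ℤ)) * Tpoly (i+1) * ((Bpoly (n-i)).comp (X^2)) := by
    intro i _
    rw [show n+1-(i+1) = n-i by omega, Nat.choose_succ_succ]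
    push_cast
    rw [C_add]
    ring
  have keyR : ∀ k ∈ Finset.range (n+1),
      C ((n.choose k : ℤ)) * (Tpoly (k+1) * ((Bpoly (n-k)).comp (X^2))
          + Tpoly k * ((Bpoly (n-k+1)).comp (X^2)))
      = C ((n.choose k : ℤ)) * Tpoly (k+1) * ((Bpoly (n-k)).comp (X^2))
        + C ((n.choose k : ℤ)) * Tpoly k * ((Bpoly (n-k+1)).comp (X^2)) := by
    intro k _; ring
  rw [Finset.sum_range_succ' (fun k => C (((n+1).choose k : ℤ)) * Tpoly k
        * ((Bpoly (n+1-k)).comp (X ^ 2))) (n+1)]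
  rw [Finset.sum_congr rfl key, Finset.sum_add_distrib]
  rw [Finset.sum_congr rfl keyR, Finset.sum_add_distrib]
  rw [Finset.sum_range_succ (fun i => C ((n.choose (i+1) : ℤ)) * Tpoly (i+1)
        * ((Bpoly (n-i)).comp (X^2))) n]
  rw [Nat.choose_succ_self]
  rw [Finset.sum_range_succ' (fun k => C ((n.choose k : ℤ)) * Tpoly k
        * ((Bpoly (n-k+1)).comp (X^2))) n]
  have congr2 : ∀ i ∈ Finset.range n,
      C ((n.choose (i+1) : ℤ)) * Tpoly (i+1) * ((Bpoly (n-(i+1)+1)).comp (X^2))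
      = C ((n.choose (i+1) : ℤ)) * Tpoly (i+1) * ((Bpoly (n-i)).comp (X^2)) := by
    intro i hi
    rw [Finset.mem_range] at hi
    rw [show n-(i+1)+1 = n-i by omega]
  rw [Finset.sum_congr rfl congr2]
  simp only [Nat.choose_zero_right, Nat.choose_self, Nat.cast_one, Nat.cast_zero, map_one,
    map_zero, one_mul, zero_mul, Nat.sub_zero, Nat.sub_self, Nat.add_sub_cancel, Tpoly_zero,
    mul_one, add_zero, zero_add]
  ring


/-- For n ≥ 1, T_(n+1)(x) = x · ∑_(k=0)^(n) C(n,k) T_k(x) B_(n-k)(x²). -/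
theorem stmt11 (n : ℕ) (hn : 1 ≤ n) :
    Tpoly (n+1) = Polynomial.X * ∑ k ∈ Finset.range (n+1),
      Polynomial.C ((n.choose k : ℤ)) * Tpoly k
        * ((Bpoly (n-k)).comp (Polynomial.X ^ 2)) := by

  induction n, hn using Nat.le_induction with
  | base =>
    rw [Tpoly_two, Finset.sum_range_succ, Finset.sum_range_one]
    simp only [Nat.choose_self, Nat.choose_zero_right, Nat.cast_one, map_one, one_mul,
      Nat.sub_self, Nat.sub_zero, Tpoly_zero, Bp0, Bp1, Tpoly_one]
    simp only [add_comp, one_comp, X_comp]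
    ring
  | succ n hn ih =>
    rw [show n+1+1 = (n+1)+1 from rfl, Trec (n+1), ih, pascal n]
    rw [Dop_mul, Dop_X, Dop_sum]
    have dsum : ∀ k ∈ Finset.range (n+1),
        Dop (C ((n.choose k : ℤ)) * Tpoly k * ((Bpoly (n-k)).comp (X^2)))
        = C ((n.choose k : ℤ)) * (Dop (Tpoly k) * ((Bpoly (n-k)).comp (X^2))
            + Tpoly k * Dop ((Bpoly (n-k)).comp (X^2))) := by
      intro k _
      rw [Dop_mul, Dop_Cmul]
      ring
    rw [Finset.sum_congr rfl dsum]
    have hL : ∀ (S S' : ℤ[X]),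
        (1 - X^2) * (X * S + X * S') + (X + C (2*(((n+1):ℕ):ℤ)) * X^2) * (X * S)
        = ((1-X^2)*X + (X + C (2*(((n+1):ℕ):ℤ))*X^2)*X) * S + ((1-X^2)*X) * S' := by
      intro S S'; ring
    rw [hL, Finset.mul_sum, Finset.mul_sum, Finset.mul_sum, ← Finset.sum_add_distrib]
    refine Finset.sum_congr rfl fun k hk => ?_
    rw [Finset.mem_range, Nat.lt_succ_iff] at hk
    rw [Trec k, Qrec (n-k)]
    have hcast : ((n-k : ℕ) : ℤ) = (n:ℤ) - (k:ℤ) := by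
      push_cast [Nat.cast_sub hk]; ring
    have hC : (C (2*(((n+1):ℕ):ℤ)) : ℤ[X])
        = C (2*(k:ℤ)) + C (2*((n-k : ℕ):ℤ)+1) + 1 := by
      rw [show (2*(((n+1):ℕ):ℤ)) = 2*(k:ℤ) + ((2*((n-k : ℕ):ℤ)+1) + 1) by
        rw [hcast]; push_cast; ring]
      rw [C_add, C_add, C_1]
      ring
    rw [hC]
    ring

end Aux
end
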